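/- Let a, T, X, Ỹ ∈ ℂ with a ≠ 0, a ≠ 1, a + (1−a)T ≠ 0 and X ≠ 0. Set a' = 1 − 1/a and μ = 1 − a' = 1/a, and define t = a/(a + (1−a)T), x = −a(1−X)/((a + (1−a)T)·X), and y = −(1−a)a²·Ỹ/((a + (1−a)T)³·X²). Then y² = x(x−1)(x−t)·t(t−1)(t−a) holds if and only if μ·Ỹ² = X(1−X)·T(1−T)·(1 − a'TX). (This is the birational equivalence used to identify the Picard–Fuchs operator of the one-parameter twisted Legendre pencil of Picard rank 19 with the hypergeometric operator of ₃F₂(1/2,1/2,1/2;1,1 | 1 − 1/a).) -/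

import Mathlib

set_option maxHeartbeats 1000000

/-- The birational equivalence identifying the Picard–Fuchs operator of the
one-parameter twisted Legendre pencil `y² = x(x-1)(x-t)·t(t-1)(t-a)` (Picard rank 19)
with the hypergeometric operator of `₃F₂(1/2,1/2,1/2;1,1 | 1 - 1/a)`. -/
theorem rank19_twisted_legendre_iff_3F2
    (a T X Yt : ℂ)
    (ha : a ≠ 0) (ha1 : a ≠ 1)
    (hden : a + (1 - a)*T ≠ 0) (hX : X ≠ 0)
    (a' μ t x y : ℂ)
    (ha' : a' = 1 - 1/a) (hμ : μ = 1 - a')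
    (ht : t = a / (a + (1 - a)*T))
    (hx : x = -(a*(1 - X)) / ((a + (1 - a)*T) * X))
    (hy : y = -((1 - a)*a^2*Yt) / ((a + (1 - a)*T)^3 * X^2)) :
    y^2 = x*(x - 1)*(x - t)*t*(t - 1)*(t - a) ↔
      μ * Yt^2 = X*(1 - X)*T*(1 - T)*(1 - a'*T*X) := by
  set D := a + (1 - a)*T with hD
  have hDX : D * X ≠ 0 := mul_ne_zero hden hX
  have E0 : x * (D*X) = -(a*(1 - X)) := by rw [hx, div_mul_cancel₀ _ hDX]
  have Et : t * D = a := by rw [ht, div_mul_cancel₀ _ hden]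
  have Ey : y * (D^3*X^2) = -((1 - a)*a^2*Yt) := by
    rw [hy, div_mul_cancel₀]
    exact mul_ne_zero (pow_ne_zero 3 hden) (pow_ne_zero 2 hX)
  have ha'' : a' = (a - 1)/a := by rw [ha']; field_simp
  have hμ' : μ = 1/a := by rw [hμ, ha'']; field_simp; ring
  have key : (y^2 - x*(x - 1)*(x - t)*t*(t - 1)*(t - a)) * (D^6 * X^4)
      = (1 - a)^2 * a^5 * (μ * Yt^2 - X*(1 - X)*T*(1 - T)*(1 - a'*T*X)) := by
    have expand : (y^2 - x*(x - 1)*(x - t)*t*(t - 1)*(t - a)) * (D^6 * X^4)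
        = (y*(D^3*X^2))^2
          - (x*(D*X)) * ((x*(D*X)) - D*X) * ((x*(D*X)) - (t*D)*X)
            * (t*D) * ((t*D) - D) * ((t*D) - a*D) * X := by ring
    rw [expand, E0, Et, Ey, ha'', hμ']
    field_simp
    ring
  have hD6 : D^6 * X^4 ≠ 0 :=
    mul_ne_zero (pow_ne_zero 6 hden) (pow_ne_zero 4 hX)
  have hfac : (1 - a)^2 * a^5 ≠ 0 :=
    mul_ne_zero (pow_ne_zero 2 (sub_ne_zero.mpr (Ne.symm ha1))) (pow_ne_zero 5 ha)
  constructor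
  · intro h
    have h0 : (1 - a)^2 * a^5 * (μ * Yt^2 - X*(1 - X)*T*(1 - T)*(1 - a'*T*X)) = 0 := by
      rw [← key, h]; ring
    have h1 := (mul_eq_zero.mp h0).resolve_left hfac
    exact sub_eq_zero.mp h1
  · intro h
    have h0 : (y^2 - x*(x - 1)*(x - t)*t*(t - 1)*(t - a)) * (D^6 * X^4) = 0 := by
      rw [key, h]; ring
    have h1 := (mul_eq_zero.mp h0).resolve_right hD6
    exact sub_eq_zero.mp h1
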